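/- The following derivation-system fact underlying the PCP reduction holds: in the inductive system with axioms G(G_{s_i}(Pr), G_{t_i}(Pr)) for i=1,…,n and closure rule 'G(u,v) derivable implies G(G_{s_i}(u), G_{t_i}(v)) derivable', a term of the form G(g, g) (same argument twice) is derivable if and only if there exist k ≥ 1 and indices i₁,…,i_k such that g = G_{s_{i₁}}(G_{s_{i₂}}(… G_{s_{i_k}}(Pr)…)) and g = G_{t_{i₁}}(G_{t_{i₂}}(… G_{t_{i_k}}(Pr)…)), which happens iff s_{i₁}·…·s_{i_k} = t_{i₁}·…·t_{i_k}. -/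
import Mathlib


/- Terms freely generated by a constant `pr`, one unary constructor `gs σ` per symbol `σ`
of the alphabet, and a binary constructor `G`. -/
inductive Tm (σ : Type) where
  | pr : Tm σ
  | gs : σ → Tm σ → Tm σ
  | G : Tm σ → Tm σ → Tm σ

/-- `Gstr s u` is the composition `G_{σ₁}(…(G_{σ_m}(u))…)` for the string `s = σ₁…σ_m`. -/
def Gstr {σ : Type} : List σ → Tm σ → Tm σ
  | [], u => u
  | a :: s, u => Tm.gs a (Gstr s u)

/-- The derivation system with axioms `G(G_{sᵢ}(Pr), G_{tᵢ}(Pr))` and closure rule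
"from `G(u, v)` derive `G(G_{sᵢ}(u), G_{tᵢ}(v))`", for each pair `(sᵢ, tᵢ)`. -/
inductive Deriv {σ : Type} (pairs : List (List σ × List σ)) : Tm σ → Prop
  | ax {s t : List σ} : (s, t) ∈ pairs → Deriv pairs (Tm.G (Gstr s Tm.pr) (Gstr t Tm.pr))
  | step {s t : List σ} {u v : Tm σ} : (s, t) ∈ pairs → Deriv pairs (Tm.G u v) →
      Deriv pairs (Tm.G (Gstr s u) (Gstr t v))

theorem Gstr_append {σ : Type} (s t : List σ) (u : Tm σ) :
    Gstr (s ++ t) u = Gstr s (Gstr t u) := by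
  induction s with
  | nil => rfl
  | cons a s ih => simp [Gstr, ih]

theorem Gstr_pr_inj {σ : Type} {s t : List σ} (h : Gstr s Tm.pr = Gstr t Tm.pr) :
    s = t := by
  induction s generalizing t with
  | nil => cases t with
    | nil => rfl
    | cons b t => exact absurd h (by simp [Gstr])
  | cons a s ih =>
    cases t with
    | nil => exact absurd h (by simp [Gstr])
    | cons b t =>
      simp only [Gstr, Tm.gs.injEq] at h
      exact h.1 ▸ (ih h.2) ▸ rfl

theorem deriv_char {σ : Type} (pairs : List (List σ × List σ)) {w : Tm σ}
    (h : Deriv pairs w) :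
    ∃ l : List (List σ × List σ), l ≠ [] ∧ (∀ p ∈ l, p ∈ pairs) ∧
      w = Tm.G (Gstr (l.map Prod.fst).flatten Tm.pr) (Gstr (l.map Prod.snd).flatten Tm.pr) := by
  induction h with
  | @ax s t hst => exact ⟨[(s, t)], by simp, by simpa using hst, by simp [Gstr]⟩
  | @step s t u v hst _ ih =>
    obtain ⟨l, hne, hmem, hw⟩ := ih
    injection hw with h1 h2
    refine ⟨(s, t) :: l, by simp, ?_, ?_⟩
    · intro p hp
      rcases List.mem_cons.mp hp with rfl | hp'
      · exact hst
      · exact hmem p hp'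
    · simp [h1, h2, Gstr_append]

theorem deriv_of_list {σ : Type} (pairs : List (List σ × List σ))
    (l : List (List σ × List σ)) (hne : l ≠ []) (hmem : ∀ p ∈ l, p ∈ pairs) :
    Deriv pairs (Tm.G (Gstr (l.map Prod.fst).flatten Tm.pr)
      (Gstr (l.map Prod.snd).flatten Tm.pr)) := by
  induction l with
  | nil => exact absurd rfl hne
  | cons p l ih =>
    obtain ⟨s, t⟩ := p
    cases l with
    | nil => simpa [Gstr] using Deriv.ax (hmem (s, t) (by simp))
    | cons q l' =>
      have hmem' : ∀ p ∈ q :: l', p ∈ pairs := fun p hp => hmem p (by simp [hp])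
      have := Deriv.step (hmem (s, t) (by simp)) (ih (by simp) hmem')
      simpa [Gstr_append] using this

/-- A term of the form `G(g, g)` is derivable iff there is a nonempty sequence of pairs
`(s_{i₁}, t_{i₁}), …, (s_{i_k}, t_{i_k})` from the system such that
`g = G_{s_{i₁}}(… G_{s_{i_k}}(Pr) …)` and `g = G_{t_{i₁}}(… G_{t_{i_k}}(Pr) …)`,
which happens iff the two concatenations `s_{i₁}·…·s_{i_k}` and `t_{i₁}·…·t_{i_k}` are
equal (and `g` is the term built from the common concatenation). -/
theorem deriv_diag_iff {σ : Type} (pairs : List (List σ × List σ)) (g : Tm σ) :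
    (Deriv pairs (Tm.G g g) ↔
      (∃ l : List (List σ × List σ), l ≠ [] ∧ (∀ p ∈ l, p ∈ pairs) ∧
        g = Gstr (l.map Prod.fst).flatten Tm.pr ∧ g = Gstr (l.map Prod.snd).flatten Tm.pr)) ∧
    ((∃ l : List (List σ × List σ), l ≠ [] ∧ (∀ p ∈ l, p ∈ pairs) ∧
        g = Gstr (l.map Prod.fst).flatten Tm.pr ∧ g = Gstr (l.map Prod.snd).flatten Tm.pr) ↔
      (∃ l : List (List σ × List σ), l ≠ [] ∧ (∀ p ∈ l, p ∈ pairs) ∧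
        (l.map Prod.fst).flatten = (l.map Prod.snd).flatten ∧
        g = Gstr (l.map Prod.fst).flatten Tm.pr)) := by
  constructor
  · constructor
    · intro h
      obtain ⟨l, hne, hmem, hw⟩ := deriv_char pairs h
      injection hw with h1 h2
      exact ⟨l, hne, hmem, h1, h2⟩
    · rintro ⟨l, hne, hmem, hf, hs⟩
      have := deriv_of_list pairs l hne hmem
      rw [← hf, ← hs] at this
      exact this
  · constructor
    · rintro ⟨l, hne, hmem, hf, hs⟩
      refine ⟨l, hne, hmem, ?_, hf⟩
      exact Gstr_pr_inj (hf ▸ hs)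
    · rintro ⟨l, hne, hmem, heq, hf⟩
      exact ⟨l, hne, hmem, hf, heq ▸ hf⟩
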